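/- Let {X_n} be an irreducible Markov chain on a finite state space S with initial distribution q, transition matrix P, and stationary distribution π. Let τ₁ be the first return time to the initial state, and let N(x,y,0,τ₁) = Σ_{n=0}^{τ₁-1} 1{X_n = x, X_{n+1} = y} be the number of transitions from x to y before time τ₁. Then for all x, y ∈ S, π(x)P(x,y) = E_{(q,P)}[N(x,y,0,τ₁)] / E_{(q,P)}[τ₁]. -/

import Mathlib

open Finset

namespace Stmt1Aux

variable {S : Type*} [Fintype S] [DecidableEq S]

/-- transition matrix with column `z` zeroed out -/
def Q (P : S → S → ℝ) (z : S) : Matrix S S ℝ := Matrix.of fun a b => if b = z then 0 else P a b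

@[simp] lemma Q_apply (P : S → S → ℝ) (z a b : S) :
    Q P z a b = if b = z then 0 else P a b := rfl

lemma Q_nonneg {P : S → S → ℝ} (hP0 : ∀ x y, 0 ≤ P x y) (z a b : S) : 0 ≤ Q P z a b := by
  rw [Q_apply]; split <;> simp [hP0 a b]

lemma Q_le_P {P : S → S → ℝ} (hP0 : ∀ x y, 0 ≤ P x y) (z a b : S) : Q P z a b ≤ P a b := by
  rw [Q_apply]; split <;> simp [hP0 a b]

lemma Qpow_nonneg {P : S → S → ℝ} (hP0 : ∀ x y, 0 ≤ P x y) (z : S) :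
    ∀ (n : ℕ) (a b : S), 0 ≤ (Q P z ^ n) a b := by
  intro n
  induction n with
  | zero => intro a b; simp [Matrix.one_apply]; split <;> norm_num
  | succ n ih =>
    intro a b
    rw [pow_succ, Matrix.mul_apply]
    exact Finset.sum_nonneg fun c _ => mul_nonneg (ih a c) (Q_nonneg hP0 z c b)

lemma Ppow_nonneg {P : S → S → ℝ} (hP0 : ∀ x y, 0 ≤ P x y) :
    ∀ (n : ℕ) (a b : S), 0 ≤ ((Matrix.of P) ^ n) a b := by
  intro n
  induction n with
  | zero => intro a b; simp [Matrix.one_apply]; split <;> norm_num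
  | succ n ih =>
    intro a b
    rw [pow_succ, Matrix.mul_apply]
    exact Finset.sum_nonneg fun c _ => mul_nonneg (ih a c) (hP0 c b)

lemma Ppow_rowsum {P : S → S → ℝ} (hP1 : ∀ x, ∑ y, P x y = 1) :
    ∀ (n : ℕ) (a : S), ∑ b, ((Matrix.of P) ^ n) a b = 1 := by
  intro n
  induction n with
  | zero => intro a; simp [Matrix.one_apply]
  | succ n ih =>
    intro a
    simp only [pow_succ, Matrix.mul_apply]
    rw [Finset.sum_comm]
    have : ∀ c : S, ∑ b, ((Matrix.of P) ^ n) a c * Matrix.of P c b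
        = ((Matrix.of P) ^ n) a c := by
      intro c
      rw [← Finset.mul_sum]
      have : ∑ b, Matrix.of P c b = 1 := hP1 c
      rw [this, mul_one]
    simp only [this]
    exact ih a

lemma Ppow_le_one {P : S → S → ℝ} (hP0 : ∀ x y, 0 ≤ P x y) (hP1 : ∀ x, ∑ y, P x y = 1)
    (n : ℕ) (a b : S) : ((Matrix.of P) ^ n) a b ≤ 1 := by
  calc ((Matrix.of P) ^ n) a b ≤ ∑ c, ((Matrix.of P) ^ n) a c :=
        Finset.single_le_sum (fun c _ => Ppow_nonneg hP0 n a c) (Finset.mem_univ b)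
    _ = 1 := Ppow_rowsum hP1 n a


lemma Q_rowsum {P : S → S → ℝ} (hP1 : ∀ x, ∑ y, P x y = 1) (z c : S) :
    ∑ b, Q P z c b = 1 - P c z := by
  have h : ∀ b, Q P z c b = P c b - (if b = z then P c b else 0) := by
    intro b; rw [Q_apply]; split <;> ring
  simp only [h]
  rw [Finset.sum_sub_distrib, hP1 c, Finset.sum_ite_eq' Finset.univ z (fun b => P c b)]
  simp

/-- probability of avoiding `z` for `n` steps starting from `c` -/
noncomputable def arow (P : S → S → ℝ) (z : S) (n : ℕ) (c : S) : ℝ := ∑ b, (Q P z ^ n) c b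

lemma arow_zero (P : S → S → ℝ) (z c : S) : arow P z 0 c = 1 := by
  simp [arow, Matrix.one_apply]

lemma arow_nonneg {P : S → S → ℝ} (hP0 : ∀ x y, 0 ≤ P x y) (z : S) (n : ℕ) (c : S) :
    0 ≤ arow P z n c :=
  Finset.sum_nonneg fun b _ => Qpow_nonneg hP0 z n c b

lemma arow_succ (P : S → S → ℝ) (z : S) (n : ℕ) (c : S) :
    arow P z (n+1) c = ∑ b, Q P z c b * arow P z n b := by
  simp only [arow, pow_succ', Matrix.mul_apply]
  rw [Finset.sum_comm]
  simp only [Finset.mul_sum]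

lemma arow_add (P : S → S → ℝ) (z : S) (m k : ℕ) (c : S) :
    arow P z (m + k) c = ∑ b, (Q P z ^ m) c b * arow P z k b := by
  simp only [arow, pow_add, Matrix.mul_apply]
  rw [Finset.sum_comm]
  simp only [Finset.mul_sum]

lemma arow_one (P : S → S → ℝ) (z c : S) :
    arow P z 1 c = ∑ b, Q P z c b := by
  simp [arow]

lemma Qpow_le_arow {P : S → S → ℝ} (hP0 : ∀ x y, 0 ≤ P x y) (z : S) (n : ℕ) (c b : S) :
    (Q P z ^ n) c b ≤ arow P z n c :=
  Finset.single_le_sum (fun u _ => Qpow_nonneg hP0 z n c u) (Finset.mem_univ b)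

lemma arow_antitone {P : S → S → ℝ} (hP0 : ∀ x y, 0 ≤ P x y) (hP1 : ∀ x, ∑ y, P x y = 1)
    (z : S) : ∀ (n : ℕ) (c : S), arow P z (n+1) c ≤ arow P z n c := by
  intro n
  induction n with
  | zero =>
    intro c
    rw [arow_zero, arow_one]
    calc ∑ b, Q P z c b ≤ ∑ b, P c b := Finset.sum_le_sum fun b _ => Q_le_P hP0 z c b
      _ = 1 := hP1 c
  | succ n ih =>
    intro c
    rw [arow_succ, arow_succ]
    exact Finset.sum_le_sum fun b _ => mul_le_mul_of_nonneg_left (ih b) (Q_nonneg hP0 z c b)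

lemma arow_le_one {P : S → S → ℝ} (hP0 : ∀ x y, 0 ≤ P x y) (hP1 : ∀ x, ∑ y, P x y = 1)
    (z : S) (n : ℕ) (c : S) : arow P z n c ≤ 1 := by
  induction n with
  | zero => rw [arow_zero]
  | succ n ih => exact le_trans (arow_antitone hP0 hP1 z n c) ih

lemma arow_mono_le {P : S → S → ℝ} (hP0 : ∀ x y, 0 ≤ P x y) (hP1 : ∀ x, ∑ y, P x y = 1)
    (z : S) {m n : ℕ} (h : m ≤ n) (c : S) : arow P z n c ≤ arow P z m c := by
  induction n with
  | zero => have : m = 0 := Nat.le_zero.mp h; subst this; exact le_refl _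
  | succ n ih =>
    rcases Nat.lt_or_ge m (n+1) with h' | h'
    · exact le_trans (arow_antitone hP0 hP1 z n c) (ih (Nat.lt_succ_iff.mp h'))
    · have : m = n + 1 := le_antisymm h h'
      subst this; exact le_refl _

/-- key bound: probability of avoiding z for k steps is at most 1 - (P^t) c z for 1 ≤ t ≤ k -/
lemma arow_le_one_sub {P : S → S → ℝ} (hP0 : ∀ x y, 0 ≤ P x y) (hP1 : ∀ x, ∑ y, P x y = 1)
    (z : S) : ∀ (t : ℕ), 1 ≤ t → ∀ (k : ℕ), t ≤ k → ∀ c,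
    arow P z k c ≤ 1 - ((Matrix.of P) ^ t) c z := by
  intro t
  induction t with
  | zero => intro h; omega
  | succ t ih =>
    intro _ k hk c
    rcases Nat.eq_zero_or_pos t with ht | ht
    · -- t + 1 = 1
      subst ht
      have h1 : arow P z k c ≤ arow P z 1 c := arow_mono_le hP0 hP1 z hk c
      rw [arow_one] at h1
      rw [Q_rowsum hP1 z c] at h1
      have : ((Matrix.of P) ^ (0+1)) c z = P c z := by
        rw [pow_one]; rfl
      rw [this]
      linarith
    · -- inductive step
      obtain ⟨k', rfl⟩ : ∃ k', k = k' + 1 := ⟨k - 1, by omega⟩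
      have hk' : t ≤ k' := by omega
      rw [arow_succ]
      have step : ∀ b, Q P z c b * arow P z k' b
          ≤ Q P z c b * (1 - ((Matrix.of P) ^ t) b z) := fun b => by
        rcases eq_or_ne b z with rfl | hbz
        · simp
        · exact mul_le_mul_of_nonneg_left (ih ht k' hk' b) (Q_nonneg hP0 z c b)
      calc ∑ b, Q P z c b * arow P z k' b
          ≤ ∑ b, Q P z c b * (1 - ((Matrix.of P) ^ t) b z) :=
            Finset.sum_le_sum fun b _ => step b
        _ = ∑ b, Q P z c b - ∑ b, Q P z c b * ((Matrix.of P) ^ t) b z := by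
            rw [← Finset.sum_sub_distrib]; congr 1; ext b; ring
        _ ≤ (1 - P c z) - ∑ b, Q P z c b * ((Matrix.of P) ^ t) b z := by
            rw [Q_rowsum hP1 z c]
        _ ≤ 1 - ((Matrix.of P) ^ (t+1)) c z := by
            have hexp : ((Matrix.of P) ^ (t+1)) c z = ∑ b, P c b * ((Matrix.of P) ^ t) b z := by
              rw [pow_succ', Matrix.mul_apply]; rfl
            have hQP : ∀ b, Q P z c b * ((Matrix.of P) ^ t) b z
                = P c b * ((Matrix.of P) ^ t) b z - (if b = z then P c z * ((Matrix.of P) ^ t) z z else 0) := by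
              intro b; rw [Q_apply]; split
              · rename_i h; subst h; ring
              · ring
            rw [hexp]
            simp only [hQP]
            rw [Finset.sum_sub_distrib, Finset.sum_ite_eq' Finset.univ z
              (fun b => P c z * ((Matrix.of P) ^ t) z z)]
            simp only [Finset.mem_univ, if_true]
            have h1 : P c z * ((Matrix.of P) ^ t) z z ≤ P c z :=
              mul_le_of_le_one_right (hP0 c z) (Ppow_le_one hP0 hP1 t z z)
            nlinarith [h1]



section Irred
variable {P : S → S → ℝ} (hP0 : ∀ x y, 0 ≤ P x y) (hP1 : ∀ x, ∑ y, P x y = 1)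
    (hirr : ∀ x y : S, ∃ n : ℕ, 0 < ((Matrix.of P) ^ n) x y)

omit hP0 hP1 hirr in
lemma Ppow_mul_le (hp0 : ∀ x y, 0 ≤ P x y) (m n : ℕ) (a b c : S) :
    ((Matrix.of P) ^ m) a b * ((Matrix.of P) ^ n) b c ≤ ((Matrix.of P) ^ (m + n)) a c := by
  rw [pow_add, Matrix.mul_apply]
  exact Finset.single_le_sum (f := fun u => ((Matrix.of P) ^ m) a u * ((Matrix.of P) ^ n) u c)
    (fun u _ => mul_nonneg (Ppow_nonneg hp0 m a u) (Ppow_nonneg hp0 n u c)) (Finset.mem_univ b)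

include hP0 hP1 hirr in
/-- choose positive-time positive-probability paths between every pair -/
lemma exists_pos_time : ∀ c z : S, ∃ t : ℕ, 1 ≤ t ∧ 0 < ((Matrix.of P) ^ t) c z := by
  intro c z
  rcases eq_or_ne c z with rfl | hne
  · by_cases hw : ∃ w : S, w ≠ c
    · obtain ⟨w, hw⟩ := hw
      obtain ⟨t1, ht1⟩ := hirr c w
      obtain ⟨t2, ht2⟩ := hirr w c
      have ht1' : 1 ≤ t1 := by
        rcases Nat.eq_zero_or_pos t1 with rfl | h
        · rw [pow_zero, Matrix.one_apply_ne (fun h => hw h.symm)] at ht1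
          · exact absurd ht1 (lt_irrefl 0)
        · exact h
      have ht2' : 1 ≤ t2 := by
        rcases Nat.eq_zero_or_pos t2 with rfl | h
        · rw [pow_zero, Matrix.one_apply_ne hw] at ht2
          exact absurd ht2 (lt_irrefl 0)
        · exact h
      exact ⟨t1 + t2, by omega,
        lt_of_lt_of_le (mul_pos ht1 ht2) (Ppow_mul_le hP0 t1 t2 c w c)⟩
    · push_neg at hw
      refine ⟨1, le_refl 1, ?_⟩
      have : ((Matrix.of P) ^ 1) c c = P c c := by rw [pow_one]; rfl
      rw [this]
      have := hP1 c
      rw [Finset.sum_eq_single c (fun b _ hb => absurd (hw b) hb) (by simp)] at this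
      rw [this]; norm_num
  · obtain ⟨t, ht⟩ := hirr c z
    have : 1 ≤ t := by
      rcases Nat.eq_zero_or_pos t with rfl | h
      · rw [pow_zero, Matrix.one_apply_ne hne] at ht
        exact absurd ht (lt_irrefl 0)
      · exact h
    exact ⟨t, this, ht⟩

end Irred

section Decay
variable {P : S → S → ℝ}

/-- A uniform horizon K and gap ε: from any state, any target is reached within K steps
with probability at least ε. Conclusion stated as a bound on avoidance probabilities. -/
lemma exists_K_eps [Nonempty S] (hP0 : ∀ x y, 0 ≤ P x y) (hP1 : ∀ x, ∑ y, P x y = 1)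
    (hirr : ∀ x y : S, ∃ n : ℕ, 0 < ((Matrix.of P) ^ n) x y) :
    ∃ (K : ℕ) (ρ : ℝ), 1 ≤ K ∧ 0 ≤ ρ ∧ ρ < 1 ∧
      ∀ (z : S) (k : ℕ), K ≤ k → ∀ c, arow P z k c ≤ ρ := by
  have hex := exists_pos_time hP0 hP1 hirr
  choose t ht1 htpos using hex
  obtain ⟨cz, -, hcz⟩ := Finset.exists_max_image (Finset.univ : Finset (S × S))
    (fun p => t p.1 p.2) ⟨Classical.arbitrary (S × S), Finset.mem_univ _⟩
  obtain ⟨cw, -, hcw⟩ := Finset.exists_min_image (Finset.univ : Finset (S × S))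
    (fun p => ((Matrix.of P) ^ t p.1 p.2) p.1 p.2) ⟨Classical.arbitrary (S × S), Finset.mem_univ _⟩
  set K := t cz.1 cz.2 with hK
  set ε := ((Matrix.of P) ^ t cw.1 cw.2) cw.1 cw.2 with hε
  have hεpos : 0 < ε := htpos cw.1 cw.2
  have hεle : ∀ c z, ε ≤ ((Matrix.of P) ^ t c z) c z := fun c z => hcw (c, z) (Finset.mem_univ _)
  refine ⟨K, 1 - ε, ht1 cz.1 cz.2, ?_, by linarith, ?_⟩
  · have : ε ≤ 1 := le_trans (hεle cw.1 cw.2) (Ppow_le_one hP0 hP1 _ _ _)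
    linarith
  · intro z k hk c
    have htK : t c z ≤ K := hcz (c, z) (Finset.mem_univ _)
    have := arow_le_one_sub hP0 hP1 z (t c z) (ht1 c z) k (le_trans htK hk) c
    have := hεle c z
    linarith

lemma arow_decay (hP0 : ∀ x y, 0 ≤ P x y)
    {K : ℕ} {ρ : ℝ} (hρ : ∀ (z : S) (k : ℕ), K ≤ k → ∀ c, arow P z k c ≤ ρ)
    (z : S) (n : ℕ) (c : S) : arow P z (n + K) c ≤ ρ * arow P z n c := by
  rw [arow_add]
  calc ∑ b, (Q P z ^ n) c b * arow P z K b
      ≤ ∑ b, (Q P z ^ n) c b * ρ :=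
        Finset.sum_le_sum fun b _ => mul_le_mul_of_nonneg_left (hρ z K (le_refl K) b)
          (Qpow_nonneg hP0 z n c b)
    _ = ρ * arow P z n c := by rw [← Finset.sum_mul, arow]; ring

lemma arow_geom (hP0 : ∀ x y, 0 ≤ P x y) (hP1 : ∀ x, ∑ y, P x y = 1)
    {K : ℕ} {ρ : ℝ} (hρ0 : 0 ≤ ρ) (hρ : ∀ (z : S) (k : ℕ), K ≤ k → ∀ c, arow P z k c ≤ ρ)
    (z : S) : ∀ (m : ℕ) (c : S), arow P z (m * K) c ≤ ρ ^ m := by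
  intro m
  induction m with
  | zero => intro c; simp [arow_zero]
  | succ m ih =>
    intro c
    have : (m + 1) * K = m * K + K := by ring
    rw [this]
    calc arow P z (m * K + K) c ≤ ρ * arow P z (m * K) c := arow_decay hP0 hρ z (m * K) c
      _ ≤ ρ * ρ ^ m := mul_le_mul_of_nonneg_left (ih c) hρ0
      _ = ρ ^ (m + 1) := by ring

/-- partial sums of avoidance probabilities are uniformly bounded -/
lemma arow_partial_sum_le (hP0 : ∀ x y, 0 ≤ P x y) (hP1 : ∀ x, ∑ y, P x y = 1)
    {K : ℕ} {ρ : ℝ} (hK : 1 ≤ K) (hρ0 : 0 ≤ ρ) (hρ1 : ρ < 1)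
    (hρ : ∀ (z : S) (k : ℕ), K ≤ k → ∀ c, arow P z k c ≤ ρ)
    (z : S) (c : S) (M : ℕ) :
    ∑ n ∈ Finset.range M, arow P z n c ≤ K / (1 - ρ) := by
  have geom_le : ∀ m : ℕ, ∑ i ∈ Finset.range m, ρ ^ i ≤ 1 / (1 - ρ) := by
    intro m
    rw [le_div_iff₀ (by linarith : (0:ℝ) < 1 - ρ)]
    have hg := geom_sum_mul ρ m
    have : (0:ℝ) ≤ ρ ^ m := pow_nonneg hρ0 m
    nlinarith
  have block : ∀ M' : ℕ, ∑ n ∈ Finset.range (M' * K), arow P z n c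
      ≤ K * ∑ m ∈ Finset.range M', ρ ^ m := by
    intro M'
    induction M' with
    | zero => simp
    | succ M' ih =>
      have h1 : (M' + 1) * K = M' * K + K := by ring
      rw [h1, Finset.sum_range_add, Finset.sum_range_succ, mul_add]
      have h2 : ∑ i ∈ Finset.range K, arow P z (M' * K + i) c ≤ K * ρ ^ M' := by
        calc ∑ i ∈ Finset.range K, arow P z (M' * K + i) c
            ≤ ∑ i ∈ Finset.range K, arow P z (M' * K) c :=
              Finset.sum_le_sum fun i _ => arow_mono_le hP0 hP1 z (Nat.le_add_right _ _) c
          _ = K * arow P z (M' * K) c := by rw [Finset.sum_const, Finset.card_range]; ring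
          _ ≤ K * ρ ^ M' := mul_le_mul_of_nonneg_left (arow_geom hP0 hP1 hρ0 hρ z M' c)
              (Nat.cast_nonneg K)
      linarith
  calc ∑ n ∈ Finset.range M, arow P z n c
      ≤ ∑ n ∈ Finset.range (M * K), arow P z n c := by
        apply Finset.sum_le_sum_of_subset_of_nonneg
        · exact Finset.range_subset_range.mpr (Nat.le_mul_of_pos_right M hK)
        · exact fun n _ _ => arow_nonneg hP0 z n c
    _ ≤ K * ∑ m ∈ Finset.range M, ρ ^ m := block M
    _ ≤ K * (1 / (1 - ρ)) := mul_le_mul_of_nonneg_left (geom_le M) (Nat.cast_nonneg K)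
    _ = K / (1 - ρ) := by ring

lemma summable_arow [Nonempty S] (hP0 : ∀ x y, 0 ≤ P x y) (hP1 : ∀ x, ∑ y, P x y = 1)
    (hirr : ∀ x y : S, ∃ n : ℕ, 0 < ((Matrix.of P) ^ n) x y) (z c : S) :
    Summable (fun n => arow P z n c) := by
  obtain ⟨K, ρ, hK, hρ0, hρ1, hρ⟩ := exists_K_eps hP0 hP1 hirr
  exact summable_of_sum_range_le (fun n => arow_nonneg hP0 z n c)
    (fun M => arow_partial_sum_le hP0 hP1 hK hρ0 hρ1 hρ z c M)

/-- the avoidance probabilities tend to 0 -/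
lemma arow_tendsto_zero [Nonempty S] (hP0 : ∀ x y, 0 ≤ P x y) (hP1 : ∀ x, ∑ y, P x y = 1)
    (hirr : ∀ x y : S, ∃ n : ℕ, 0 < ((Matrix.of P) ^ n) x y) (z c : S) :
    Filter.Tendsto (fun n => arow P z n c) Filter.atTop (nhds 0) :=
  (summable_arow hP0 hP1 hirr z c).tendsto_atTop_zero

end Decay

section Words
variable (P : S → S → ℝ)

/-- weight of a path starting at `c` and then visiting `w 0, w 1, ...` -/
def step (c : S) {n : ℕ} (w : Fin n → S) : ℝ :=
  ∏ i : Fin n, P ((Fin.cons c w : Fin (n+1) → S) i.castSucc) (w i)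

/-- last state of the path `c, w 0, ..., w (n-1)` -/
def lastc (c : S) {n : ℕ} (w : Fin n → S) : S := (Fin.cons c w : Fin (n+1) → S) (Fin.last n)

lemma step_zero (c : S) (w : Fin 0 → S) : step P c w = 1 := by
  simp [step]

lemma step_cons (c v : S) {n : ℕ} (w : Fin n → S) :
    step P c (Fin.cons v w) = P c v * step P v w := by
  unfold step
  rw [Fin.prod_univ_succ]
  refine congrArg₂ (· * ·) ?_ ?_
  · simp
  · apply Finset.prod_congr rfl
    intro i _
    rw [Fin.cons_succ]
    refine congrArg₂ P ?_ rfl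
    rw [← Fin.succ_castSucc]
    rw [Fin.cons_succ]

lemma lastc_zero (c : S) (w : Fin 0 → S) : lastc c w = c := by
  simp [lastc, Fin.last]

lemma lastc_cons (c v : S) {n : ℕ} (w : Fin n → S) :
    lastc c (Fin.cons v w) = lastc v w := by
  unfold lastc
  rw [← Fin.succ_last, Fin.cons_succ]

/-- fundamental word-sum identity -/
lemma wordsum (z : S) : ∀ (n : ℕ) (c : S) (f : S → ℝ),
    (∑ w : Fin n → S, if (∀ i, w i ≠ z) then step P c w * f (lastc c w) else 0)
      = ((Q P z) ^ n).mulVec f c := by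
  intro n
  induction n with
  | zero =>
    intro c f
    rw [Fintype.sum_unique]
    simp only [pow_zero, Matrix.one_mulVec]
    rw [if_pos (fun i => i.elim0)]
    rw [step_zero, lastc_zero, one_mul]
  | succ n ih =>
    intro c f
    rw [← Equiv.sum_comp (Fin.consEquiv (fun _ => S))
      (fun w => if (∀ i, w i ≠ z) then step P c w * f (lastc c w) else 0)]
    rw [Fintype.sum_prod_type]
    have key : ∀ (v : S) (w : Fin n → S),
        (if (∀ i, (Fin.consEquiv (fun _ => S)) (v, w) i ≠ z)
          then step P c ((Fin.consEquiv (fun _ => S)) (v, w))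
            * f (lastc c ((Fin.consEquiv (fun _ => S)) (v, w))) else 0)
        = Q P z c v * (if (∀ i, w i ≠ z) then step P v w * f (lastc v w) else 0) := by
      intro v w
      have hc : (Fin.consEquiv (fun _ => S)) (v, w) = Fin.cons v w := rfl
      rw [hc]
      have hiff : (∀ i, (Fin.cons v w : Fin (n+1) → S) i ≠ z) ↔ (v ≠ z ∧ ∀ i, w i ≠ z) := by
        rw [Fin.forall_fin_succ]
        simp [Fin.cons_succ]
      rw [step_cons, lastc_cons, Q_apply]
      by_cases hv : v = z
      · subst hv
        rw [if_neg (fun h => (hiff.mp h).1 rfl), if_pos rfl, zero_mul]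
      · rw [if_neg hv]
        by_cases hw : ∀ i, w i ≠ z
        · rw [if_pos (hiff.mpr ⟨hv, hw⟩), if_pos hw]; ring
        · rw [if_neg (fun h => hw (hiff.mp h).2), if_neg hw, mul_zero]
    simp only [key]
    simp only [← Finset.mul_sum]
    simp only [ih]
    rw [pow_succ']
    rw [← Matrix.mulVec_mulVec]
    rfl

/-- the indicator vector -/
def ind (u : S) : S → ℝ := fun b => if b = u then 1 else 0

lemma mulVec_ind (M : Matrix S S ℝ) (u c : S) : M.mulVec (ind u) c = M c u := by
  unfold Matrix.mulVec dotProduct ind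
  simp [mul_ite]

lemma wordsum_ind (z : S) (n : ℕ) (c u : S) :
    (∑ w : Fin n → S, if ((∀ i, w i ≠ z) ∧ lastc c w = u) then step P c w else 0)
      = ((Q P z) ^ n) c u := by
  rw [← mulVec_ind ((Q P z) ^ n) u c, ← wordsum]
  apply Finset.sum_congr rfl
  intro w _
  by_cases h1 : ∀ i, w i ≠ z
  · rw [if_pos h1]
    unfold ind
    by_cases h2 : lastc c w = u
    · rw [if_pos ⟨h1, h2⟩, if_pos h2, mul_one]
    · rw [if_neg (fun h => h2 h.2), if_neg h2, mul_zero]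
  · rw [if_neg (fun h => h1 h.1), if_neg h1]

end Words

section Words2
variable (q : S → ℝ) (P : S → S → ℝ)

/-- weight of a cylinder: initial distribution times transition products -/
def mwt {n : ℕ} (w : Fin (n+1) → S) : ℝ :=
  q (w 0) * ∏ i : Fin n, P (w i.castSucc) (w i.succ)

/-- the predicate describing "start at z, avoid z afterwards, end at u" -/
def QpA (n : ℕ) (z u : S) (w : Fin (n+1) → S) : Prop :=
  w 0 = z ∧ (∀ i : Fin (n+1), i ≠ 0 → w i ≠ z) ∧ w (Fin.last n) = u

instance (n : ℕ) (z u : S) : DecidablePred (QpA n z u) := fun w => by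
  unfold QpA; infer_instance

lemma mwt_cons {n : ℕ} (v : S) (w : Fin n → S) :
    mwt q P (Fin.cons v w) = q v * step P v w := by
  unfold mwt step
  refine congrArg₂ (· * ·) (by simp) ?_
  apply Finset.prod_congr rfl
  intro i _
  rw [Fin.cons_succ]

lemma sum_QpA (n : ℕ) (z u : S) :
    (∑ w : Fin (n+1) → S, if QpA n z u w then mwt q P w else 0)
      = q z * ((Q P z) ^ n) z u := by
  rw [← Equiv.sum_comp (Fin.consEquiv (fun _ => S))
    (fun w => if QpA n z u w then mwt q P w else 0)]
  rw [Fintype.sum_prod_type]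
  have key : ∀ (v : S) (w : Fin n → S),
      (if QpA n z u ((Fin.consEquiv (fun _ => S)) (v, w))
        then mwt q P ((Fin.consEquiv (fun _ => S)) (v, w)) else 0)
      = (if v = z then 1 else 0) *
          (q z * (if ((∀ i, w i ≠ z) ∧ lastc v w = u) then step P v w else 0)) := by
    intro v w
    have hc : (Fin.consEquiv (fun _ => S)) (v, w) = Fin.cons v w := rfl
    rw [hc, mwt_cons]
    have hQ : QpA n z u (Fin.cons v w) ↔ (v = z ∧ (∀ i, w i ≠ z) ∧ lastc v w = u) := by
      unfold QpA
      constructor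
      · rintro ⟨h0, h1, h2⟩
        refine ⟨by simpa using h0, fun i => ?_, h2⟩
        have := h1 i.succ (Fin.succ_ne_zero i)
        rwa [Fin.cons_succ] at this
      · rintro ⟨h0, h1, h2⟩
        refine ⟨by simpa using h0, ?_, h2⟩
        intro i hi
        rcases Fin.eq_zero_or_eq_succ i with rfl | ⟨j, rfl⟩
        · exact absurd rfl hi
        · rw [Fin.cons_succ]; exact h1 j
    by_cases hv : v = z
    · subst hv
      rw [if_pos rfl, one_mul]
      by_cases hw : (∀ i, w i ≠ v) ∧ lastc v w = u
      · rw [if_pos (hQ.mpr ⟨rfl, hw.1, hw.2⟩), if_pos hw]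
      · rw [if_neg (fun h => hw ⟨(hQ.mp h).2.1, (hQ.mp h).2.2⟩), if_neg hw, mul_zero]
    · rw [if_neg (fun h => hv (hQ.mp h).1), if_neg hv, zero_mul]
  simp only [key]
  have h2 : ∀ v : S, (∑ w : Fin n → S, (if v = z then (1:ℝ) else 0) *
      (q z * (if ((∀ i, w i ≠ z) ∧ lastc v w = u) then step P v w else 0)))
      = (if v = z then 1 else 0) * (q z * ((Q P z) ^ n) v u) := by
    intro v
    rw [← Finset.mul_sum, ← Finset.mul_sum, wordsum_ind]
  simp only [h2]
  have h3 : ∀ v : S, (if v = z then (1:ℝ) else 0) * (q z * ((Q P z) ^ n) v u)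
      = if v = z then q z * ((Q P z) ^ n) v u else 0 := by
    intro v; split <;> ring
  simp only [h3]
  rw [Finset.sum_ite_eq' Finset.univ z (fun v => q z * ((Q P z) ^ n) v u)]
  simp

lemma mwt_snoc {n : ℕ} (w : Fin (n+1) → S) (v : S) :
    mwt q P (Fin.snoc w v) = mwt q P w * P (w (Fin.last n)) v := by
  unfold mwt
  rw [Fin.prod_univ_castSucc
    (f := fun i : Fin (n+1) => P ((Fin.snoc w v : Fin (n+2) → S) i.castSucc)
      ((Fin.snoc w v : Fin (n+2) → S) i.succ))]
  have h0 : (Fin.snoc w v : Fin (n+2) → S) 0 = w 0 := by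
    have h : ((0 : Fin (n+2))) = ((0 : Fin (n+1)).castSucc) := by simp
    rw [h, Fin.snoc_castSucc]
  have hlast : P ((Fin.snoc w v : Fin (n+2) → S) (Fin.last n).castSucc)
      ((Fin.snoc w v : Fin (n+2) → S) (Fin.last n).succ) = P (w (Fin.last n)) v := by
    rw [Fin.snoc_castSucc, Fin.succ_last, Fin.snoc_last]
  have hmid : ∀ i : Fin n,
      P ((Fin.snoc w v : Fin (n+2) → S) (i.castSucc).castSucc)
        ((Fin.snoc w v : Fin (n+2) → S) (i.castSucc).succ)
      = P (w i.castSucc) (w i.succ) := by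
    intro i
    rw [Fin.snoc_castSucc, Fin.succ_castSucc, Fin.snoc_castSucc]
  rw [h0, hlast]
  have hprod : (∏ i : Fin n, P ((Fin.snoc w v : Fin (n+2) → S) (i.castSucc).castSucc)
      ((Fin.snoc w v : Fin (n+2) → S) (i.castSucc).succ)) = ∏ i : Fin n, P (w i.castSucc) (w i.succ) :=
    Finset.prod_congr rfl fun i _ => hmid i
  rw [hprod]
  ring

/-- extending a cylinder predicate by one more step multiplies its weight sum by `P u v` -/
lemma sum_snoc_step {n : ℕ} (R : (Fin (n+1) → S) → Prop) [DecidablePred R] (u v : S)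
    (hR : ∀ w, R w → w (Fin.last n) = u) :
    (∑ w : Fin (n+2) → S,
        if (R (fun i : Fin (n+1) => w i.castSucc) ∧ w (Fin.last (n+1)) = v)
          then mwt q P w else 0)
    = (∑ w : Fin (n+1) → S, if R w then mwt q P w else 0) * P u v := by
  rw [← Equiv.sum_comp (Fin.snocEquiv (fun _ => S))
    (fun w => if (R (fun i : Fin (n+1) => w i.castSucc) ∧ w (Fin.last (n+1)) = v)
      then mwt q P w else 0)]
  rw [Fintype.sum_prod_type]
  have key : ∀ (v' : S) (w : Fin (n+1) → S),
      (if (R (fun i : Fin (n+1) => (Fin.snocEquiv (fun _ => S)) (v', w) i.castSucc)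
          ∧ (Fin.snocEquiv (fun _ => S)) (v', w) (Fin.last (n+1)) = v)
        then mwt q P ((Fin.snocEquiv (fun _ => S)) (v', w)) else 0)
      = (if v' = v then 1 else 0) * (if R w then mwt q P w * P u v else 0) := by
    intro v' w
    have hc : (Fin.snocEquiv (fun _ => S)) (v', w) = Fin.snoc w v' := rfl
    rw [hc]
    have hres : (fun i : Fin (n+1) => (Fin.snoc w v' : Fin (n+2) → S) i.castSucc) = w := by
      funext i; rw [Fin.snoc_castSucc]
    have hlast : (Fin.snoc w v' : Fin (n+2) → S) (Fin.last (n+1)) = v' := Fin.snoc_last _ _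
    rw [hres, hlast, mwt_snoc]
    by_cases h1 : R w
    · have hu : w (Fin.last n) = u := hR w h1
      by_cases h2 : v' = v
      · subst h2
        rw [if_pos ⟨h1, rfl⟩, if_pos rfl, if_pos h1, hu, one_mul]
      · rw [if_neg (fun h => h2 h.2), if_neg h2, zero_mul]
    · rw [if_neg (fun h => h1 h.1), if_neg h1, mul_zero]
  simp only [key]
  have h2 : ∀ v' : S, (∑ w : Fin (n+1) → S,
      (if v' = v then (1:ℝ) else 0) * (if R w then mwt q P w * P u v else 0))
      = (if v' = v then 1 else 0) * ((∑ w : Fin (n+1) → S, if R w then mwt q P w else 0) * P u v) := by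
    intro v'
    rw [← Finset.mul_sum]
    congr 1
    rw [Finset.sum_mul]
    apply Finset.sum_congr rfl
    intro w _
    split <;> ring
  simp only [h2]
  have h3 : ∀ v' : S, (if v' = v then (1:ℝ) else 0) *
      ((∑ w : Fin (n+1) → S, if R w then mwt q P w else 0) * P u v)
      = if v' = v then (∑ w : Fin (n+1) → S, if R w then mwt q P w else 0) * P u v else 0 := by
    intro v'; split <;> ring
  simp only [h3]
  rw [Finset.sum_ite_eq' Finset.univ v
    (fun _ => (∑ w : Fin (n+1) → S, if R w then mwt q P w else 0) * P u v)]
  simp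

end Words2

section Meas
open MeasureTheory
variable [MeasurableSpace S] [MeasurableSingletonClass S]
variable {Ω : Type*} [MeasurableSpace Ω] (μ : Measure Ω) [IsProbabilityMeasure μ]
variable (X : ℕ → Ω → S)

/-- extension of a finite word to an infinite path -/
def extw {n : ℕ} (w : Fin (n+1) → S) : ℕ → S := fun i => w ⟨min i n, by omega⟩

lemma extw_agree {n : ℕ} (w : Fin (n+1) → S) (i : Fin (n+1)) : extw w i = w i := by
  unfold extw
  congr 1
  exact Fin.ext (by simp [Nat.min_eq_left (Nat.lt_succ_iff.mp i.isLt)])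

/-- the fundamental cylinder decomposition: the probability that the first n+1 states
satisfy a predicate equals the sum of the weights of the admissible words. -/
lemma cyl (hX : ∀ i, Measurable (X i)) (q : S → ℝ) (P : S → S → ℝ)
    (hMC : ∀ (n : ℕ) (path : ℕ → S),
      (μ {ω | ∀ i ≤ n, X i ω = path i}).toReal
        = q (path 0) * ∏ i ∈ Finset.range n, P (path i) (path (i + 1)))
    (n : ℕ) (Qp : (Fin (n+1) → S) → Prop) [DecidablePred Qp] :
    (μ {ω | Qp (fun i : Fin (n+1) => X i ω)}).toReal
      = ∑ w : Fin (n+1) → S, if Qp w then mwt q P w else 0 := by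
  classical
  set Y : Ω → (Fin (n+1) → S) := fun ω i => X i ω with hY
  have hYm : Measurable Y := measurable_pi_lambda _ (fun i => hX i)
  have hset : {ω | Qp (Y ω)} = ⋃ w ∈ Finset.univ.filter Qp, Y ⁻¹' {w} := by
    ext ω
    simp only [Set.mem_setOf_eq, Set.mem_iUnion, Finset.mem_filter, Finset.mem_univ, true_and,
      Set.mem_preimage, Set.mem_singleton_iff]
    constructor
    · intro h; exact ⟨Y ω, h, rfl⟩
    · rintro ⟨w, hw, rfl⟩; exact hw
  have hdisj : (↑(Finset.univ.filter Qp) : Set (Fin (n+1) → S)).PairwiseDisjoint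
      (fun w => Y ⁻¹' {w}) := by
    intro w1 _ w2 _ hne
    apply Set.disjoint_left.mpr
    intro ω h1 h2
    exact hne (h1.symm.trans h2)
  have hmeas : ∀ w ∈ Finset.univ.filter Qp, MeasurableSet (Y ⁻¹' {w}) :=
    fun w _ => hYm (measurableSet_singleton w)
  rw [hset, measure_biUnion_finset hdisj hmeas, ENNReal.toReal_sum
    (fun w _ => measure_ne_top μ _)]
  rw [Finset.sum_filter]
  apply Finset.sum_congr rfl
  intro w _
  by_cases hw : Qp w
  · rw [if_pos hw, if_pos hw]
    have hpre : Y ⁻¹' {w} = {ω | ∀ i ≤ n, X i ω = extw w i} := by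
      ext ω
      simp only [Set.mem_preimage, Set.mem_singleton_iff, Set.mem_setOf_eq]
      constructor
      · intro h i hi
        rw [extw_agree w ⟨i, by omega⟩]
        exact congrFun h ⟨i, by omega⟩
      · intro h
        funext i
        rw [← extw_agree w i]
        exact h i (Nat.lt_succ_iff.mp i.isLt)
    rw [hpre, hMC n (extw w)]
    unfold mwt
    have h0 : extw w 0 = w 0 := extw_agree w 0
    rw [h0]
    congr 1
    rw [← Fin.prod_univ_eq_prod_range (fun i => P (extw w i) (extw w (i+1))) n]
    apply Finset.prod_congr rfl
    intro i _
    have ha : extw w (i : ℕ) = w i.castSucc := by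
      have := extw_agree w i.castSucc
      rwa [Fin.coe_castSucc] at this
    have hb : extw w ((i : ℕ) + 1) = w i.succ := by
      have := extw_agree w i.succ
      rwa [Fin.val_succ] at this
    rw [ha, hb]
  · rw [if_neg hw, if_neg hw]

/-- no return through time n -/
def QpB (n : ℕ) (w : Fin (n+1) → S) : Prop := ∀ i : Fin (n+1), i ≠ 0 → w i ≠ w 0

instance (n : ℕ) : DecidablePred (QpB (S := S) n) := fun w => by
  unfold QpB; infer_instance

lemma sum_QpB_split (q : S → ℝ) (P : S → S → ℝ) (n : ℕ) (w : Fin (n+1) → S) :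
    (if QpB n w then mwt q P w else 0)
      = ∑ z, ∑ u, (if QpA n z u w then mwt q P w else 0) := by
  rw [Finset.sum_comm]
  rw [Finset.sum_eq_single (w (Fin.last n))]
  · rw [Finset.sum_eq_single (w 0)]
    · by_cases h : ∀ i : Fin (n+1), i ≠ 0 → w i ≠ w 0
      · rw [if_pos (show QpB n w from h), if_pos (show QpA n (w 0) (w (Fin.last n)) w from ⟨rfl, h, rfl⟩)]
      · rw [if_neg (show ¬ QpB n w from h)]
        have : ¬ ((w 0 = w 0) ∧ (∀ i : Fin (n+1), i ≠ 0 → w i ≠ w 0) ∧ w (Fin.last n) = w (Fin.last n)) := by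
          rintro ⟨-, h2, -⟩
          exact h h2
        rw [if_neg (show ¬ QpA n (w 0) (w (Fin.last n)) w from this)]
    · intro z _ hz
      rw [if_neg (fun hc => hz hc.1.symm)]
    · intro h; exact absurd (Finset.mem_univ _) h
  · intro u _ hu
    apply Finset.sum_eq_zero
    intro z _
    rw [if_neg (fun hc => hu hc.2.2.symm)]
  · intro h; exact absurd (Finset.mem_univ _) h

lemma sum_QpB (q : S → ℝ) (P : S → S → ℝ) (n : ℕ) :
    (∑ w : Fin (n+1) → S, if QpB n w then mwt q P w else 0)
      = ∑ z, q z * arow P z n z := by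
  simp only [sum_QpB_split]
  rw [Finset.sum_comm]
  apply Finset.sum_congr rfl
  intro z _
  rw [Finset.sum_comm]
  have : ∀ u, (∑ w : Fin (n+1) → S, if QpA n z u w then mwt q P w else 0)
      = q z * ((Q P z) ^ n) z u := fun u => sum_QpA q P n z u
  simp only [this]
  rw [← Finset.mul_sum, arow]

/-- no return through n, at x at time n, at y at time n+1 -/
def QpC (n : ℕ) (x v : S) (w : Fin (n+2) → S) : Prop :=
  QpA n (w 0) x (fun i : Fin (n+1) => w i.castSucc) ∧ w (Fin.last (n+1)) = v

instance (n : ℕ) (x v : S) : DecidablePred (QpC (S := S) n x v) := fun w => by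
  unfold QpC; infer_instance

lemma sum_QpC_split (q : S → ℝ) (P : S → S → ℝ) (n : ℕ) (x v : S) (w : Fin (n+2) → S) :
    (if QpC n x v w then mwt q P w else 0)
      = ∑ z, (if (QpA n z x (fun i : Fin (n+1) => w i.castSucc)
          ∧ w (Fin.last (n+1)) = v) then mwt q P w else 0) := by
  rw [Finset.sum_eq_single (w 0)]
  · unfold QpC
    have h0 : (fun i : Fin (n+1) => w i.castSucc) 0 = w 0 := by
      simp
    rfl
  · intro z _ hz
    apply if_neg
    rintro ⟨h1, -⟩
    apply hz
    rw [← h1.1]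
    simp
  · intro h; exact absurd (Finset.mem_univ _) h

lemma sum_QpC (q : S → ℝ) (P : S → S → ℝ) (n : ℕ) (x v : S) :
    (∑ w : Fin (n+2) → S, if QpC n x v w then mwt q P w else 0)
      = (∑ z, q z * ((Q P z) ^ n) z x) * P x v := by
  simp only [sum_QpC_split]
  rw [Finset.sum_comm]
  have inner : ∀ z, (∑ w : Fin (n+2) → S,
      if (QpA n z x (fun i : Fin (n+1) => w i.castSucc)
          ∧ w (Fin.last (n+1)) = v) then mwt q P w else 0)
      = q z * ((Q P z) ^ n) z x * P x v := by
    intro z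
    rw [sum_snoc_step q P (QpA n z x) x v (fun w₁ h => h.2.2), sum_QpA]
  simp only [inner]
  rw [Finset.sum_mul]

variable (q : S → ℝ) (P : S → S → ℝ)
variable (hMC : ∀ (n : ℕ) (path : ℕ → S),
      (μ {ω | ∀ i ≤ n, X i ω = path i}).toReal
        = q (path 0) * ∏ i ∈ Finset.range n, P (path i) (path (i + 1)))

include hMC in
lemma measure_B (hX : ∀ i, Measurable (X i)) (n : ℕ) :
    (μ {ω | ∀ i, 1 ≤ i → i ≤ n → X i ω ≠ X 0 ω}).toReal = ∑ z, q z * arow P z n z := by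
  have hset : {ω | ∀ i, 1 ≤ i → i ≤ n → X i ω ≠ X 0 ω}
      = {ω | QpB n (fun i : Fin (n+1) => X i ω)} := by
    ext ω
    simp only [Set.mem_setOf_eq]
    unfold QpB
    constructor
    · intro h i hi
      have h1 : 1 ≤ (i:ℕ) := Nat.one_le_iff_ne_zero.mpr (fun hc => hi (Fin.ext hc))
      have h2 : (i:ℕ) ≤ n := Nat.lt_succ_iff.mp i.isLt
      have h3 := h i h1 h2
      simpa using h3
    · intro h i hi1 hi2
      have h3 := h ⟨i, by omega⟩ (by
        intro hc
        have : (⟨i, by omega⟩ : Fin (n+1)).val = (0 : Fin (n+1)).val := by rw [hc]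
        simp at this
        omega)
      simpa using h3
  rw [hset, cyl μ X hX q P hMC n (QpB n), sum_QpB]

include hMC in
lemma measure_Bxy (hX : ∀ i, Measurable (X i)) (n : ℕ) (x v : S) :
    (μ {ω | (∀ i, 1 ≤ i → i ≤ n → X i ω ≠ X 0 ω) ∧ X n ω = x ∧ X (n+1) ω = v}).toReal
      = (∑ z, q z * ((Q P z) ^ n) z x) * P x v := by
  have hset : {ω | (∀ i, 1 ≤ i → i ≤ n → X i ω ≠ X 0 ω) ∧ X n ω = x ∧ X (n+1) ω = v}
      = {ω | QpC n x v (fun i : Fin (n+2) => X i ω)} := by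
    ext ω
    simp only [Set.mem_setOf_eq]
    unfold QpC QpA
    constructor
    · rintro ⟨h1, h2, h3⟩
      refine ⟨⟨by simp, ?_, ?_⟩, by simp [h3]⟩
      · intro i hi
        have ha : 1 ≤ (i:ℕ) := Nat.one_le_iff_ne_zero.mpr (fun hc => hi (Fin.ext hc))
        have hb : (i:ℕ) ≤ n := Nat.lt_succ_iff.mp i.isLt
        have h4 := h1 i ha hb
        simpa [Fin.coe_castSucc] using h4
      · simpa [Fin.coe_castSucc] using h2
    · rintro ⟨⟨-, h2, h3⟩, h4⟩
      refine ⟨?_, by simpa [Fin.coe_castSucc] using h3, by simpa using h4⟩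
      intro i hi1 hi2
      have h5 := h2 ⟨i, by omega⟩ (by
        intro hc
        have : (⟨i, by omega⟩ : Fin (n+1)).val = (0 : Fin (n+1)).val := by rw [hc]
        simp at this
        omega)
      simpa [Fin.coe_castSucc] using h5
  rw [hset, cyl μ X hX q P hMC (n+1) (QpC n x v), sum_QpC]

omit [MeasurableSingletonClass S] in
lemma lt_tau_iff (τ : Ω → ℕ) (hτ : ∀ ω, τ ω = sInf {k | 0 < k ∧ X k ω = X 0 ω})
    (n : ℕ) (ω : Ω) :
    n < τ ω ↔ ((∀ i, 1 ≤ i → i ≤ n → X i ω ≠ X 0 ω) ∧ ∃ m, 0 < m ∧ X m ω = X 0 ω) := by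
  rw [hτ ω]
  by_cases hT : {k | 0 < k ∧ X k ω = X 0 ω}.Nonempty
  · have hmem := Nat.sInf_mem hT
    constructor
    · intro hlt
      refine ⟨?_, hT⟩
      intro i h1 h2 hEq
      have hi : i ∈ {k | 0 < k ∧ X k ω = X 0 ω} := ⟨h1, hEq⟩
      have := Nat.sInf_le hi
      omega
    · rintro ⟨hno, -⟩
      by_contra hle
      push_neg at hle
      exact hno _ hmem.1 (le_trans hle (le_refl n)) hmem.2
  · have hempty : {k | 0 < k ∧ X k ω = X 0 ω} = ∅ := Set.not_nonempty_iff_eq_empty.mp hT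
    rw [hempty, Nat.sInf_empty]
    constructor
    · omega
    · rintro ⟨-, m, hm1, hm2⟩
      have : m ∈ {k | 0 < k ∧ X k ω = X 0 ω} := ⟨hm1, hm2⟩
      rw [hempty] at this
      exact absurd this (Set.notMem_empty m)

/-- the set of trajectories that return -/
def Rset : Set Ω := {ω | ∃ m, 0 < m ∧ X m ω = X 0 ω}

lemma measurable_eq_X (hX : ∀ i, Measurable (X i)) (i j : ℕ) :
    MeasurableSet {ω | X i ω = X j ω} := by
  have : {ω | X i ω = X j ω} = ⋃ s : S, (X i ⁻¹' {s} ∩ X j ⁻¹' {s}) := by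
    ext ω
    simp only [Set.mem_setOf_eq, Set.mem_iUnion, Set.mem_inter_iff, Set.mem_preimage,
      Set.mem_singleton_iff]
    constructor
    · intro h; exact ⟨X j ω, h, rfl⟩
    · rintro ⟨s, h1, h2⟩; exact h1.trans h2.symm
  rw [this]
  exact MeasurableSet.iUnion fun s =>
    ((hX i) (measurableSet_singleton s)).inter ((hX j) (measurableSet_singleton s))

lemma measurable_Rset (hX : ∀ i, Measurable (X i)) : MeasurableSet (Rset X) := by
  have : Rset X = ⋃ m : ℕ, ⋃ (_ : 0 < m), {ω | X m ω = X 0 ω} := by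
    ext ω
    simp [Rset]
  rw [this]
  exact MeasurableSet.iUnion fun m => MeasurableSet.iUnion fun _ => measurable_eq_X X hX m 0

lemma measurable_Bset (hX : ∀ i, Measurable (X i)) (n : ℕ) :
    MeasurableSet {ω | ∀ i, 1 ≤ i → i ≤ n → X i ω ≠ X 0 ω} := by
  have : {ω | ∀ i, 1 ≤ i → i ≤ n → X i ω ≠ X 0 ω}
      = ⋂ i : ℕ, ⋂ (_ : 1 ≤ i), ⋂ (_ : i ≤ n), {ω | X i ω = X 0 ω}ᶜ := by
    ext ω; simp [Set.mem_iInter]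
  rw [this]
  exact MeasurableSet.iInter fun i => MeasurableSet.iInter fun _ =>
    MeasurableSet.iInter fun _ => (measurable_eq_X X hX i 0).compl

include hMC in
lemma measure_Cset (hX : ∀ i, Measurable (X i)) [Nonempty S]
    (hq0 : ∀ z, 0 ≤ q z)
    (hP0 : ∀ a b, 0 ≤ P a b) (hP1 : ∀ a, ∑ b, P a b = 1)
    (hirr : ∀ a b : S, ∃ k : ℕ, 0 < ((Matrix.of P) ^ k) a b) :
    μ (Rset X)ᶜ = 0 := by
  have hsub : ∀ n : ℕ, (Rset X)ᶜ ⊆ {ω | ∀ i, 1 ≤ i → i ≤ n → X i ω ≠ X 0 ω} := by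
    intro n ω hω
    simp only [Set.mem_compl_iff, Rset, Set.mem_setOf_eq, not_exists] at hω
    intro i h1 h2 hEq
    exact hω i ⟨h1, hEq⟩
  have hbound : ∀ n : ℕ, (μ (Rset X)ᶜ).toReal ≤ ∑ z, q z * arow P z n z := by
    intro n
    rw [← measure_B μ X q P hMC hX n]
    exact ENNReal.toReal_mono (measure_ne_top μ _) (measure_mono (hsub n))
  have htend : Filter.Tendsto (fun n => ∑ z, q z * arow P z n z) Filter.atTop (nhds 0) := by
    have : Filter.Tendsto (fun n => ∑ z, q z * arow P z n z) Filter.atTop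
        (nhds (∑ z : S, q z * 0)) := by
      apply tendsto_finset_sum
      intro z _
      exact (arow_tendsto_zero hP0 hP1 hirr z z).const_mul (q z)
    simpa using this
  have hle : (μ (Rset X)ᶜ).toReal ≤ 0 := ge_of_tendsto' htend hbound
  have hge : 0 ≤ (μ (Rset X)ᶜ).toReal := ENNReal.toReal_nonneg
  have : (μ (Rset X)ᶜ).toReal = 0 := le_antisymm hle hge
  rw [ENNReal.toReal_eq_zero_iff] at this
  rcases this with h | h
  · exact h
  · exact absurd h (measure_ne_top μ _)

/-- expected number of (x,y)-transitions at time n, as a matrix quantity -/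
noncomputable def gq (q : S → ℝ) (P : S → S → ℝ) (n : ℕ) (u : S) : ℝ :=
  ∑ z, q z * ((Q P z) ^ n) z u

omit μ X hMC

omit [MeasurableSpace S] [MeasurableSingletonClass S] in
lemma gq_nonneg (hq0 : ∀ z, 0 ≤ q z) (hP0 : ∀ a b, 0 ≤ P a b) (n : ℕ) (u : S) :
    0 ≤ gq q P n u :=
  Finset.sum_nonneg fun z _ => mul_nonneg (hq0 z) (Qpow_nonneg hP0 z n z u)

omit [MeasurableSpace S] [MeasurableSingletonClass S] in
lemma gq_le_bigS (hq0 : ∀ z, 0 ≤ q z) (hP0 : ∀ a b, 0 ≤ P a b) (n : ℕ) (u : S) :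
    gq q P n u ≤ ∑ z, q z * arow P z n z :=
  Finset.sum_le_sum fun z _ =>
    mul_le_mul_of_nonneg_left (Qpow_le_arow hP0 z n z u) (hq0 z)

omit [MeasurableSpace S] [MeasurableSingletonClass S] in
lemma summable_bigS [Nonempty S] (hP0 : ∀ a b, 0 ≤ P a b) (hP1 : ∀ a, ∑ b, P a b = 1)
    (hirr : ∀ a b : S, ∃ k : ℕ, 0 < ((Matrix.of P) ^ k) a b) :
    Summable (fun n => ∑ z, q z * arow P z n z) := by
  apply summable_sum
  intro z _
  exact (summable_arow hP0 hP1 hirr z z).mul_left (q z)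

omit [MeasurableSpace S] [MeasurableSingletonClass S] in
lemma summable_gq [Nonempty S] (hq0 : ∀ z, 0 ≤ q z) (hP0 : ∀ a b, 0 ≤ P a b)
    (hP1 : ∀ a, ∑ b, P a b = 1)
    (hirr : ∀ a b : S, ∃ k : ℕ, 0 < ((Matrix.of P) ^ k) a b) (u : S) :
    Summable (fun n => gq q P n u) :=
  Summable.of_nonneg_of_le (fun n => gq_nonneg q P hq0 hP0 n u)
    (fun n => gq_le_bigS q P hq0 hP0 n u) (summable_bigS q P hP0 hP1 hirr)

include μ X hMC

include hMC in
lemma integral_N (hX : ∀ i, Measurable (X i)) [Nonempty S]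
    (hq0 : ∀ z, 0 ≤ q z)
    (hP0 : ∀ a b, 0 ≤ P a b) (hP1 : ∀ a, ∑ b, P a b = 1)
    (hirr : ∀ a b : S, ∃ k : ℕ, 0 < ((Matrix.of P) ^ k) a b)
    (τ : Ω → ℕ) (hτ : ∀ ω, τ ω = sInf {k | 0 < k ∧ X k ω = X 0 ω}) (x v : S) :
    ∫ ω, (∑ s ∈ Finset.range (τ ω),
        if X s ω = x ∧ X (s + 1) ω = v then (1 : ℝ) else 0) ∂μ
      = (∑' n, gq q P n x) * P x v := by
  classical
  set E : ℕ → Set Ω := fun n => {ω | n < τ ω ∧ X n ω = x ∧ X (n+1) ω = v} with hE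
  set Bxy : ℕ → Set Ω := fun n =>
    {ω | (∀ i, 1 ≤ i → i ≤ n → X i ω ≠ X 0 ω) ∧ X n ω = x ∧ X (n+1) ω = v} with hBxy
  have hEeq : ∀ n, E n = Bxy n \ (Rset X)ᶜ := by
    intro n
    ext ω
    simp only [hE, hBxy, Set.mem_setOf_eq, Set.mem_diff, Set.mem_compl_iff, not_not]
    rw [lt_tau_iff X τ hτ n ω]
    unfold Rset
    simp only [Set.mem_setOf_eq]
    tauto
  have hBxymeas : ∀ n, MeasurableSet (Bxy n) := by
    intro n
    have : Bxy n = {ω | ∀ i, 1 ≤ i → i ≤ n → X i ω ≠ X 0 ω}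
        ∩ (X n ⁻¹' {x}) ∩ (X (n+1) ⁻¹' {v}) := by
      ext ω
      simp only [hBxy, Set.mem_setOf_eq, Set.mem_inter_iff, Set.mem_preimage,
        Set.mem_singleton_iff]
      tauto
    rw [this]
    exact ((measurable_Bset X hX n).inter ((hX n) (measurableSet_singleton x))).inter
      ((hX (n+1)) (measurableSet_singleton v))
  have hEmeas : ∀ n, MeasurableSet (E n) := by
    intro n
    rw [hEeq n]
    exact (hBxymeas n).diff (measurable_Rset X hX).compl
  have hmuE : ∀ n, μ (E n) = ENNReal.ofReal (gq q P n x * P x v) := by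
    intro n
    rw [hEeq n, measure_diff_null (measure_Cset μ X q P hMC hX hq0 hP0 hP1 hirr)]
    rw [← ENNReal.ofReal_toReal (measure_ne_top μ (Bxy n))]
    congr 1
    rw [hBxy]
    exact measure_Bxy μ X q P hMC hX n x v
  set F : Ω → ENNReal := fun ω => ∑' n, Set.indicator (E n) (fun _ => (1:ENNReal)) ω with hF
  have hFmeas : Measurable F :=
    Measurable.ennreal_tsum fun n => measurable_const.indicator (hEmeas n)
  have hFpt : ∀ ω, F ω = ENNReal.ofReal (∑ s ∈ Finset.range (τ ω),
      if X s ω = x ∧ X (s + 1) ω = v then (1 : ℝ) else 0) := by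
    intro ω
    show (∑' n, Set.indicator (E n) (fun _ => (1:ENNReal)) ω) = _
    have h1 : ∑' n, Set.indicator (E n) (fun _ => (1:ENNReal)) ω
        = ∑ n ∈ Finset.range (τ ω), Set.indicator (E n) (fun _ => (1:ENNReal)) ω := by
      apply tsum_eq_sum
      intro n hn
      rw [Finset.mem_range] at hn
      apply Set.indicator_of_notMem
      rw [hE]
      simp only [Set.mem_setOf_eq]
      push_neg
      intro hlt
      omega
    rw [h1, ENNReal.ofReal_sum_of_nonneg (fun s _ => by positivity)]
    apply Finset.sum_congr rfl
    intro s hs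
    rw [Finset.mem_range] at hs
    rw [Set.indicator_apply]
    by_cases hc : X s ω = x ∧ X (s + 1) ω = v
    · rw [if_pos hc, if_pos ⟨hs, hc⟩]
      simp
    · rw [if_neg hc, if_neg (fun h => hc h.2)]
      simp
  have hlint : ∫⁻ ω, F ω ∂μ = ∑' n, μ (E n) := by
    show ∫⁻ ω, (∑' n, Set.indicator (E n) (fun _ => (1:ENNReal)) ω) ∂μ = _
    rw [MeasureTheory.lintegral_tsum
      (fun n => (measurable_const.indicator (hEmeas n)).aemeasurable)]
    congr 1
    funext n
    rw [MeasureTheory.lintegral_indicator (hEmeas n)]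
    simp
  have hsum : Summable (fun n => gq q P n x * P x v) :=
    (summable_gq q P hq0 hP0 hP1 hirr x).mul_right (P x v)
  have htsum : ∑' n, μ (E n) = ENNReal.ofReal (∑' n, gq q P n x * P x v) := by
    simp only [hmuE]
    rw [ENNReal.ofReal_tsum_of_nonneg
      (fun n => mul_nonneg (gq_nonneg q P hq0 hP0 n x) (hP0 x v)) hsum]
  have hint : ∫ ω, (∑ s ∈ Finset.range (τ ω),
      if X s ω = x ∧ X (s + 1) ω = v then (1 : ℝ) else 0) ∂μ = (∫⁻ ω, F ω ∂μ).toReal := by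
    rw [← MeasureTheory.integral_toReal hFmeas.aemeasurable
      (Filter.Eventually.of_forall fun ω => by rw [hFpt ω]; exact ENNReal.ofReal_lt_top)]
    apply MeasureTheory.integral_congr_ae
    apply Filter.Eventually.of_forall
    intro ω
    show (∑ s ∈ Finset.range (τ ω), if X s ω = x ∧ X (s + 1) ω = v then (1:ℝ) else 0)
      = (F ω).toReal
    rw [hFpt ω, ENNReal.toReal_ofReal (Finset.sum_nonneg fun s _ => by positivity)]
  rw [hint, hlint, htsum, ENNReal.toReal_ofReal (tsum_nonneg fun n =>
    mul_nonneg (gq_nonneg q P hq0 hP0 n x) (hP0 x v))]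
  exact (tsum_mul_right)

include hMC in
lemma integral_tau (hX : ∀ i, Measurable (X i)) [Nonempty S]
    (hq0 : ∀ z, 0 ≤ q z)
    (hP0 : ∀ a b, 0 ≤ P a b) (hP1 : ∀ a, ∑ b, P a b = 1)
    (hirr : ∀ a b : S, ∃ k : ℕ, 0 < ((Matrix.of P) ^ k) a b)
    (τ : Ω → ℕ) (hτ : ∀ ω, τ ω = sInf {k | 0 < k ∧ X k ω = X 0 ω}) :
    ∫ ω, (τ ω : ℝ) ∂μ = ∑' n, ∑ z, q z * arow P z n z := by
  classical
  set E : ℕ → Set Ω := fun n => {ω | n < τ ω} with hE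
  set B : ℕ → Set Ω := fun n => {ω | ∀ i, 1 ≤ i → i ≤ n → X i ω ≠ X 0 ω} with hB
  have hEeq : ∀ n, E n = B n \ (Rset X)ᶜ := by
    intro n
    ext ω
    simp only [hE, hB, Set.mem_setOf_eq, Set.mem_diff, Set.mem_compl_iff, not_not]
    rw [lt_tau_iff X τ hτ n ω]
    unfold Rset
    simp only [Set.mem_setOf_eq]
  have hEmeas : ∀ n, MeasurableSet (E n) := by
    intro n
    rw [hEeq n]
    exact (measurable_Bset X hX n).diff (measurable_Rset X hX).compl
  have hmuE : ∀ n, μ (E n) = ENNReal.ofReal (∑ z, q z * arow P z n z) := by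
    intro n
    rw [hEeq n, measure_diff_null (measure_Cset μ X q P hMC hX hq0 hP0 hP1 hirr)]
    rw [← ENNReal.ofReal_toReal (measure_ne_top μ (B n))]
    congr 1
    exact measure_B μ X q P hMC hX n
  set F : Ω → ENNReal := fun ω => ∑' n, Set.indicator (E n) (fun _ => (1:ENNReal)) ω with hF
  have hFmeas : Measurable F :=
    Measurable.ennreal_tsum fun n => measurable_const.indicator (hEmeas n)
  have hFpt : ∀ ω, F ω = ENNReal.ofReal ((τ ω : ℝ)) := by
    intro ω
    show (∑' n, Set.indicator (E n) (fun _ => (1:ENNReal)) ω) = _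
    have h1 : ∑' n, Set.indicator (E n) (fun _ => (1:ENNReal)) ω
        = ∑ n ∈ Finset.range (τ ω), Set.indicator (E n) (fun _ => (1:ENNReal)) ω := by
      apply tsum_eq_sum
      intro n hn
      rw [Finset.mem_range] at hn
      apply Set.indicator_of_notMem
      rw [hE]
      simp only [Set.mem_setOf_eq]
      omega
    rw [h1]
    have h2 : ∀ n ∈ Finset.range (τ ω),
        Set.indicator (E n) (fun _ => (1:ENNReal)) ω = 1 := by
      intro n hn
      rw [Finset.mem_range] at hn
      exact Set.indicator_of_mem (by rw [hE]; exact hn) _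
    rw [Finset.sum_congr rfl h2]
    simp [Finset.sum_const, Finset.card_range]
  have hlint : ∫⁻ ω, F ω ∂μ = ∑' n, μ (E n) := by
    show ∫⁻ ω, (∑' n, Set.indicator (E n) (fun _ => (1:ENNReal)) ω) ∂μ = _
    rw [MeasureTheory.lintegral_tsum
      (fun n => (measurable_const.indicator (hEmeas n)).aemeasurable)]
    congr 1
    funext n
    rw [MeasureTheory.lintegral_indicator (hEmeas n)]
    simp
  have hsum : Summable (fun n => ∑ z, q z * arow P z n z) :=
    summable_bigS q P hP0 hP1 hirr
  have htsum : ∑' n, μ (E n) = ENNReal.ofReal (∑' n, ∑ z, q z * arow P z n z) := by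
    simp only [hmuE]
    rw [ENNReal.ofReal_tsum_of_nonneg
      (fun n => Finset.sum_nonneg fun z _ =>
        mul_nonneg (hq0 z) (arow_nonneg hP0 z n z)) hsum]
  have hint : ∫ ω, (τ ω : ℝ) ∂μ = (∫⁻ ω, F ω ∂μ).toReal := by
    rw [← MeasureTheory.integral_toReal hFmeas.aemeasurable
      (Filter.Eventually.of_forall fun ω => by rw [hFpt ω]; exact ENNReal.ofReal_lt_top)]
    apply MeasureTheory.integral_congr_ae
    apply Filter.Eventually.of_forall
    intro ω
    show ((τ ω : ℝ)) = (F ω).toReal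
    rw [hFpt ω, ENNReal.toReal_ofReal (Nat.cast_nonneg _)]
  rw [hint, hlint, htsum, ENNReal.toReal_ofReal (tsum_nonneg fun n =>
    Finset.sum_nonneg fun z _ => mul_nonneg (hq0 z) (arow_nonneg hP0 z n z))]

end Meas

section Invariance
variable (q : S → ℝ) (P : S → S → ℝ)

lemma ret_eq (hP1 : ∀ a, ∑ b, P a b = 1) (z : S) (n : ℕ) :
    ∑ u, (Q P z ^ n) z u * P u z = arow P z n z - arow P z (n+1) z := by
  have h1 : arow P z (n+1) z = ∑ u, (Q P z ^ n) z u * (1 - P u z) := by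
    have := arow_add P z n 1 z
    rw [this]
    apply Finset.sum_congr rfl
    intro u _
    rw [arow_one, Q_rowsum hP1]
  rw [h1, arow]
  rw [← Finset.sum_sub_distrib]
  apply Finset.sum_congr rfl
  intro u _
  ring

lemma gq_recursion (hP1 : ∀ a, ∑ b, P a b = 1) (n : ℕ) (v : S) :
    ∑ u, gq q P n u * P u v
      = gq q P (n+1) v + q v * (arow P v n v - arow P v (n+1) v) := by
  unfold gq
  have swap : ∑ u, (∑ z, q z * (Q P z ^ n) z u) * P u v
      = ∑ z, q z * ∑ u, (Q P z ^ n) z u * P u v := by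
    simp only [Finset.sum_mul]
    rw [Finset.sum_comm]
    apply Finset.sum_congr rfl
    intro z _
    rw [Finset.mul_sum]
    apply Finset.sum_congr rfl
    intro u _
    ring
  rw [swap]
  have inner : ∀ z, ∑ u, (Q P z ^ n) z u * P u v
      = (Q P z ^ (n+1)) z v + (if v = z then arow P z n z - arow P z (n+1) z else 0) := by
    intro z
    have hsplit : ∀ u, P u v = Q P z u v + (if v = z then P u z else 0) := by
      intro u
      rw [Q_apply]
      by_cases h : v = z
      · rw [if_pos h, if_pos h, h]; ring
      · rw [if_neg h, if_neg h]; ring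
    have h2 : ∑ u, (Q P z ^ n) z u * P u v
        = ∑ u, (Q P z ^ n) z u * Q P z u v
          + ∑ u, (Q P z ^ n) z u * (if v = z then P u z else 0) := by
      rw [← Finset.sum_add_distrib]
      apply Finset.sum_congr rfl
      intro u _
      rw [hsplit u]
      ring
    rw [h2]
    have hA : ∑ u, (Q P z ^ n) z u * Q P z u v = (Q P z ^ (n+1)) z v := by
      rw [pow_succ, Matrix.mul_apply]
    have hB : (∑ u, (Q P z ^ n) z u * (if v = z then P u z else 0))
        = if v = z then arow P z n z - arow P z (n+1) z else 0 := by
      by_cases h : v = z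
      · simp only [if_pos h]
        rw [ret_eq P hP1 z n]
      · simp only [if_neg h, mul_zero, Finset.sum_const_zero]
    rw [hA, hB]
  simp only [inner, mul_add]
  rw [Finset.sum_add_distrib]
  have hfst : ∑ z, q z * (Q P z ^ (n+1)) z v = gq q P (n+1) v := rfl
  rw [hfst]
  congr 1
  have : ∀ z, q z * (if v = z then arow P z n z - arow P z (n+1) z else 0)
      = if z = v then q v * (arow P v n v - arow P v (n+1) v) else 0 := by
    intro z
    by_cases h : v = z
    · rw [if_pos h, if_pos h.symm, h]
    · rw [if_neg h, if_neg (Ne.symm h), mul_zero]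
  simp only [this]
  rw [Finset.sum_ite_eq' Finset.univ v (fun _ => q v * (arow P v n v - arow P v (n+1) v))]
  simp

lemma gq_zero (v : S) : gq q P 0 v = q v := by
  unfold gq
  simp only [pow_zero, Matrix.one_apply]
  have : ∀ z : S, q z * (if z = v then (1:ℝ) else 0) = if z = v then q v else 0 := by
    intro z
    by_cases h : z = v
    · rw [if_pos h, if_pos h, h, mul_one]
    · rw [if_neg h, if_neg h, mul_zero]
  simp only [this]
  rw [Finset.sum_ite_eq' Finset.univ v (fun _ => q v)]
  simp

lemma summable_ret [Nonempty S] (hP0 : ∀ a b, 0 ≤ P a b) (hP1 : ∀ a, ∑ b, P a b = 1)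
    (hirr : ∀ a b : S, ∃ k : ℕ, 0 < ((Matrix.of P) ^ k) a b) (z : S) :
    Summable (fun n => arow P z n z - arow P z (n+1) z) := by
  apply Summable.of_nonneg_of_le
  · intro n
    have := arow_antitone hP0 hP1 z n z
    linarith
  · intro n
    have := arow_nonneg hP0 z (n+1) z
    show arow P z n z - arow P z (n+1) z ≤ arow P z n z
    linarith
  · exact summable_arow hP0 hP1 hirr z z

lemma tsum_ret [Nonempty S] (hP0 : ∀ a b, 0 ≤ P a b) (hP1 : ∀ a, ∑ b, P a b = 1)
    (hirr : ∀ a b : S, ∃ k : ℕ, 0 < ((Matrix.of P) ^ k) a b) (z : S) :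
    ∑' n, (arow P z n z - arow P z (n+1) z) = 1 := by
  have hsum := summable_ret P hP0 hP1 hirr z
  have h1 : Filter.Tendsto (fun N => ∑ n ∈ Finset.range N, (arow P z n z - arow P z (n+1) z))
      Filter.atTop (nhds (∑' n, (arow P z n z - arow P z (n+1) z))) :=
    hsum.hasSum.tendsto_sum_nat
  have h2 : ∀ N, ∑ n ∈ Finset.range N, (arow P z n z - arow P z (n+1) z)
      = 1 - arow P z N z := by
    intro N
    rw [Finset.sum_range_sub' (fun n => arow P z n z) N]
    rw [arow_zero]
  have h3 : Filter.Tendsto (fun N => 1 - arow P z N z) Filter.atTop (nhds 1) := by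
    have := (arow_tendsto_zero hP0 hP1 hirr z z).const_sub 1
    simpa using this
  rw [funext h2] at h1
  exact tendsto_nhds_unique h1 h3

/-- invariance of the occupation vector G -/
lemma G_invariant [Nonempty S] (hq0 : ∀ z, 0 ≤ q z) (hP0 : ∀ a b, 0 ≤ P a b)
    (hP1 : ∀ a, ∑ b, P a b = 1)
    (hirr : ∀ a b : S, ∃ k : ℕ, 0 < ((Matrix.of P) ^ k) a b) (v : S) :
    ∑ u, (∑' n, gq q P n u) * P u v = ∑' n, gq q P n v := by
  have hgq : ∀ u, Summable (fun n => gq q P n u) := summable_gq q P hq0 hP0 hP1 hirr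
  have step1 : ∑ u, (∑' n, gq q P n u) * P u v = ∑ u, ∑' n, gq q P n u * P u v := by
    apply Finset.sum_congr rfl
    intro u _
    rw [tsum_mul_right]
  have step2 : ∑ u, ∑' n, gq q P n u * P u v = ∑' n, ∑ u, gq q P n u * P u v := by
    rw [Summable.tsum_finsetSum (fun u _ => (hgq u).mul_right (P u v))]
  rw [step1, step2]
  simp only [gq_recursion q P hP1]
  have hs1 : Summable (fun n => gq q P (n+1) v) := (hgq v).comp_injective (add_left_injective 1)
  have hs2 : Summable (fun n => q v * (arow P v n v - arow P v (n+1) v)) :=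
    (summable_ret P hP0 hP1 hirr v).mul_left (q v)
  rw [Summable.tsum_add hs1 hs2, tsum_mul_left, tsum_ret P hP0 hP1 hirr v, mul_one]
  have hshift : ∑' n, gq q P n v = gq q P 0 v + ∑' n, gq q P (n+1) v :=
    Summable.tsum_eq_zero_add (hgq v)
  rw [gq_zero] at hshift
  linarith

end Invariance

section Uniqueness
variable {P : S → S → ℝ}

lemma invariant_pow {ν : S → ℝ} (hν : ∀ v, ∑ u, ν u * P u v = ν v) :
    ∀ (n : ℕ) (v : S), ∑ u, ν u * ((Matrix.of P) ^ n) u v = ν v := by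
  intro n
  induction n with
  | zero =>
    intro v
    simp only [pow_zero, Matrix.one_apply]
    have : ∀ u : S, ν u * (if u = v then (1:ℝ) else 0) = if u = v then ν v else 0 := by
      intro u
      by_cases h : u = v
      · rw [if_pos h, if_pos h, h, mul_one]
      · rw [if_neg h, if_neg h, mul_zero]
    simp only [this]
    rw [Finset.sum_ite_eq' Finset.univ v (fun _ => ν v)]
    simp
  | succ n ih =>
    intro v
    have : ∀ u : S, ((Matrix.of P) ^ (n+1)) u v
        = ∑ c, ((Matrix.of P) ^ n) u c * P c v := by
      intro u
      rw [pow_succ, Matrix.mul_apply]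
      rfl
    simp only [this]
    have swap : ∑ u, ν u * ∑ c, ((Matrix.of P) ^ n) u c * P c v
        = ∑ c, (∑ u, ν u * ((Matrix.of P) ^ n) u c) * P c v := by
      simp only [Finset.mul_sum, Finset.sum_mul]
      rw [Finset.sum_comm]
      apply Finset.sum_congr rfl; intro c _
      apply Finset.sum_congr rfl; intro u _
      ring
    rw [swap]
    simp only [ih]
    exact hν v

lemma pi_pos (pi : S → ℝ) (hpi0 : ∀ u, 0 ≤ pi u) (hpi1 : ∑ u, pi u = 1)
    (hpiP : ∀ v, ∑ u, pi u * P u v = pi v)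
    (hirr : ∀ a b : S, ∃ k : ℕ, 0 < ((Matrix.of P) ^ k) a b)
    (hP0 : ∀ a b, 0 ≤ P a b) (z : S) : 0 < pi z := by
  have hw : ∃ w, 0 < pi w := by
    by_contra h
    push_neg at h
    have : ∀ w, pi w = 0 := fun w => le_antisymm (h w) (hpi0 w)
    rw [Finset.sum_congr rfl (fun w _ => this w)] at hpi1
    simp at hpi1
  obtain ⟨w, hw⟩ := hw
  obtain ⟨n, hn⟩ := hirr w z
  have := invariant_pow (ν := pi) hpiP n z
  have hterm : pi w * ((Matrix.of P) ^ n) w z ≤ ∑ u, pi u * ((Matrix.of P) ^ n) u z :=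
    Finset.single_le_sum (f := fun u => pi u * ((Matrix.of P) ^ n) u z)
      (fun u _ => mul_nonneg (hpi0 u) (Ppow_nonneg hP0 n u z)) (Finset.mem_univ w)
  rw [this] at hterm
  exact lt_of_lt_of_le (mul_pos hw hn) hterm

/-- uniqueness of the invariant measure, up to scaling -/
lemma stationary_unique [Nonempty S] (hP0 : ∀ a b, 0 ≤ P a b)
    (hirr : ∀ a b : S, ∃ k : ℕ, 0 < ((Matrix.of P) ^ k) a b)
    (pi : S → ℝ) (hpi0 : ∀ u, 0 ≤ pi u) (hpi1 : ∑ u, pi u = 1)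
    (hpiP : ∀ v, ∑ u, pi u * P u v = pi v)
    (G : S → ℝ) (hG0 : ∀ u, 0 ≤ G u) (hGP : ∀ v, ∑ u, G u * P u v = G v) :
    ∀ u, G u = (∑ w, G w) * pi u := by
  have hpipos : ∀ z, 0 < pi z := pi_pos pi hpi0 hpi1 hpiP hirr hP0
  obtain ⟨u₀, -, hu₀⟩ := Finset.exists_min_image (Finset.univ : Finset S)
    (fun u => G u / pi u) ⟨Classical.arbitrary S, Finset.mem_univ _⟩
  set c := G u₀ / pi u₀ with hc
  set h : S → ℝ := fun u => G u - c * pi u with hh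
  have hh0 : ∀ u, 0 ≤ h u := by
    intro u
    have hcle : c ≤ G u / pi u := hu₀ u (Finset.mem_univ u)
    have h2 : c * pi u ≤ G u := (le_div_iff₀ (hpipos u)).mp hcle
    simp only [hh]
    linarith
  have hhP : ∀ v, ∑ u, h u * P u v = h v := by
    intro v
    simp only [hh]
    have hterm : ∀ u, (G u - c * pi u) * P u v = G u * P u v - c * (pi u * P u v) := by
      intro u; ring
    simp only [hterm]
    rw [Finset.sum_sub_distrib, hGP, ← Finset.mul_sum, hpiP]
  have hu₀0 : h u₀ = 0 := by
    simp only [hh, hc]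
    rw [div_mul_cancel₀ (G u₀) (ne_of_gt (hpipos u₀))]
    ring
  have hall : ∀ u, h u = 0 := by
    intro w
    by_contra hw
    have hwpos : 0 < h w := lt_of_le_of_ne (hh0 w) (Ne.symm hw)
    obtain ⟨n, hn⟩ := hirr w u₀
    have hinv := invariant_pow (ν := h) hhP n u₀
    have hterm : h w * ((Matrix.of P) ^ n) w u₀ ≤ ∑ u, h u * ((Matrix.of P) ^ n) u u₀ :=
      Finset.single_le_sum (f := fun u => h u * ((Matrix.of P) ^ n) u u₀)
        (fun u _ => mul_nonneg (hh0 u) (Ppow_nonneg hP0 n u u₀)) (Finset.mem_univ w)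
    rw [hinv, hu₀0] at hterm
    nlinarith [mul_pos hwpos hn]
  have hGall : ∀ u, G u = c * pi u := by
    intro u
    have := hall u
    simp only [hh] at this
    linarith
  have hsumG : ∑ w, G w = c := by
    rw [Finset.sum_congr rfl (fun w _ => hGall w), ← Finset.mul_sum, hpi1, mul_one]
  intro u
  rw [hGall u, hsumG]

end Uniqueness
end Stmt1Aux

open MeasureTheory

/-- For an irreducible finite-state Markov chain, writing `τ₁` for the first return
time to the initial state and `N(x,y,0,τ₁)` for the number of transitions from `x`
to `y` before `τ₁`, we have `π x * P x y = E[N(x,y,0,τ₁)] / E[τ₁]`. -/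
theorem stmt_1
    {S : Type*} [Fintype S] [DecidableEq S] [MeasurableSpace S] [MeasurableSingletonClass S]
    {Ω : Type*} [MeasurableSpace Ω] (μ : Measure Ω) [IsProbabilityMeasure μ]
    (X : ℕ → Ω → S) (hX : ∀ i, Measurable (X i))
    (q : S → ℝ) (P : S → S → ℝ) (pi : S → ℝ)
    (hq0 : ∀ x, 0 ≤ q x) (hq1 : ∑ x, q x = 1)
    (hP0 : ∀ x y, 0 ≤ P x y) (hP1 : ∀ x, ∑ y, P x y = 1)
    (hirr : ∀ x y : S, ∃ n : ℕ, 0 < ((Matrix.of P) ^ n) x y)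
    (hpi0 : ∀ x, 0 ≤ pi x) (hpi1 : ∑ x, pi x = 1)
    (hpiP : ∀ y, ∑ x, pi x * P x y = pi y)
    (hMC : ∀ (n : ℕ) (path : ℕ → S),
      (μ {ω | ∀ i ≤ n, X i ω = path i}).toReal
        = q (path 0) * ∏ i ∈ Finset.range n, P (path i) (path (i + 1)))
    (τ : Ω → ℕ) (hτ : ∀ ω, τ ω = sInf {n | 0 < n ∧ X n ω = X 0 ω})
    (x y : S) :
    pi x * P x y
      = (∫ ω, (∑ s ∈ Finset.range (τ ω),
            if X s ω = x ∧ X (s + 1) ω = y then (1 : ℝ) else 0) ∂μ)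
        / (∫ ω, (τ ω : ℝ) ∂μ) := by
  classical
  have hne : Nonempty S := ⟨x⟩
  have hIN := Stmt1Aux.integral_N μ X q P hMC hX hq0 hP0 hP1 hirr τ hτ x y
  have hIT := Stmt1Aux.integral_tau μ X q P hMC hX hq0 hP0 hP1 hirr τ hτ
  set G : S → ℝ := fun u => ∑' n, Stmt1Aux.gq q P n u with hG
  set T : ℝ := ∑' n, ∑ z, q z * Stmt1Aux.arow P z n z with hT
  have hTsum : T = ∑ u, G u := by
    rw [hT, hG]
    rw [← Summable.tsum_finsetSum (fun u (_ : u ∈ Finset.univ) =>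
      Stmt1Aux.summable_gq q P hq0 hP0 hP1 hirr u)]
    congr 1
    funext n
    unfold Stmt1Aux.gq
    rw [Finset.sum_comm]
    apply Finset.sum_congr rfl
    intro z _
    rw [Stmt1Aux.arow, Finset.mul_sum]
  have hGinv : ∀ v, ∑ u, G u * P u v = G v := fun v =>
    Stmt1Aux.G_invariant q P hq0 hP0 hP1 hirr v
  have hG0 : ∀ u, 0 ≤ G u := fun u =>
    tsum_nonneg fun n => Stmt1Aux.gq_nonneg q P hq0 hP0 n u
  have huniq := Stmt1Aux.stationary_unique hP0 hirr pi hpi0 hpi1 hpiP G hG0 hGinv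
  have hT1 : (1:ℝ) ≤ T := by
    rw [hT]
    have hb := Stmt1Aux.summable_bigS q P hP0 hP1 hirr
    have hle := Summable.le_tsum hb 0 (fun n _ => Finset.sum_nonneg fun z _ =>
      mul_nonneg (hq0 z) (Stmt1Aux.arow_nonneg hP0 z n z))
    have h0 : ∑ z, q z * Stmt1Aux.arow P z 0 z = 1 := by
      have : ∀ z : S, q z * Stmt1Aux.arow P z 0 z = q z := by
        intro z; rw [Stmt1Aux.arow_zero, mul_one]
      rw [Finset.sum_congr rfl (fun z _ => this z), hq1]
    rw [h0] at hle
    exact hle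
  have hGx : G x = T * pi x := by
    rw [huniq x, hTsum]
  rw [hIN, hIT]
  have hGx' : (∑' n, Stmt1Aux.gq q P n x) = G x := rfl
  rw [hGx', hGx]
  have hTne : T ≠ 0 := by linarith
  field_simp
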